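/- Let d, p, q, m, n be natural numbers with 0 ≤ p − d ≤ n and 0 ≤ q − d ≤ m (i.e. d ≤ p ≤ n + d and d ≤ q ≤ m + d). Then there exists a nondegenerate complement datum (X, Y, ω, (λᵢ), (μᵢ)) for gl_∞ with dim X₀ = p, dim Y₀ = q, dim X/X₀ = m, dim Y/Y₀ = n, and rank(ω̃|_{X₀×Y₀}) = d. -/
import Mathlib

open Function

namespace Stmt14Aux

/-- Embedding `Fin s → Fin N`, `k ↦ a + k`. -/
def em (a : ℕ) {s N : ℕ} (h : a + s ≤ N) : Fin s → Fin N :=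
  fun k => ⟨a + k, by omega⟩

@[simp] lemma em_val (a : ℕ) {s N : ℕ} (h : a + s ≤ N) (k : Fin s) :
    ((em a h k : Fin N) : ℕ) = a + k := rfl

lemma em_inj (a : ℕ) {s N : ℕ} (h : a + s ≤ N) : Injective (em a h) := by
  intro x y hxy
  have := congrArg Fin.val hxy
  simp only [em_val] at this
  exact Fin.ext (by omega)

/-- Indicator vector: `1` at coordinate `a`, `0` elsewhere. -/
noncomputable def ee (N a : ℕ) : Fin N → ℂ := fun t => if (t : ℕ) = a then 1 else 0

lemma ee_apply_eq {N a : ℕ} (t : Fin N) (h : (t : ℕ) = a) : ee N a t = 1 := if_pos h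

lemma ee_apply_ne {N a : ℕ} (t : Fin N) (h : (t : ℕ) ≠ a) : ee N a t = 0 := if_neg h

/-- The functionals `λ_i`. -/
noncomputable def lamF (p m : ℕ) (i : ℕ) : (Fin (p + m) → ℂ) →ₗ[ℂ] ℂ :=
  if h : m = 0 then 0
  else LinearMap.proj ⟨p + i % m, by have := Nat.mod_lt i (Nat.pos_of_ne_zero h); omega⟩

/-- The projection onto the last `m` coordinates. -/
noncomputable def prF (p m : ℕ) : (Fin (p + m) → ℂ) →ₗ[ℂ] (Fin m → ℂ) :=
  LinearMap.funLeft ℂ ℂ (em p (le_refl (p + m)))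

/-- The subspace `X₀` of vectors supported in the first `p` coordinates. -/
noncomputable def XF (p m : ℕ) : Submodule ℂ (Fin (p + m) → ℂ) :=
  LinearMap.ker (prF p m)

lemma mem_XF {p m : ℕ} {x : Fin (p + m) → ℂ} :
    x ∈ XF p m ↔ ∀ j : Fin m, x (em p (le_refl (p + m)) j) = 0 := by
  simp [XF, prF, LinearMap.mem_ker, funext_iff, LinearMap.funLeft_apply]

lemma lamF_eq_zero {p m : ℕ} {x : Fin (p + m) → ℂ} (hx : x ∈ XF p m) (i : ℕ) :
    lamF p m i x = 0 := by
  unfold lamF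
  split
  · rfl
  · next h =>
    exact mem_XF.mp hx ⟨i % m, Nat.mod_lt i (Nat.pos_of_ne_zero h)⟩

lemma mem_XF_iff_finite {p m : ℕ} (x : Fin (p + m) → ℂ) :
    x ∈ XF p m ↔ {i : ℕ | lamF p m i x ≠ 0}.Finite := by
  constructor
  · intro hx
    apply Set.Finite.subset Set.finite_empty
    intro i hi
    exact absurd (lamF_eq_zero hx i) hi
  · intro hfin
    by_contra hx
    rw [mem_XF] at hx
    push_neg at hx
    obtain ⟨j, hj⟩ := hx
    have hm : m ≠ 0 := by have := j.isLt; omega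
    refine (Set.infinite_of_injective_forall_mem
      (f := fun k : ℕ => k * m + (j : ℕ)) ?_ ?_) hfin
    · intro a b hab
      simp only at hab
      have hab' := Nat.add_right_cancel hab
      exact Nat.eq_of_mul_eq_mul_right (Nat.pos_of_ne_zero hm) hab'
    · intro k
      show lamF p m (k * m + (j : ℕ)) x ≠ 0
      unfold lamF
      rw [dif_neg hm]
      have hmod : (k * m + (j : ℕ)) % m = (j : ℕ) := by
        rw [Nat.add_comm, Nat.add_mul_mod_self_right]
        exact Nat.mod_eq_of_lt j.isLt
      simp only [LinearMap.proj_apply, hmod]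
      exact hj

lemma finrank_XF (p m : ℕ) : Module.finrank ℂ (XF p m) = p := by
  have hsurj : Surjective (prF p m) :=
    LinearMap.funLeft_surjective_of_injective ℂ ℂ _ (em_inj p (le_refl (p + m)))
  have h := LinearMap.finrank_range_add_finrank_ker (prF p m)
  rw [LinearMap.range_eq_top.mpr hsurj, finrank_top] at h
  rw [Module.finrank_fin_fun, Module.finrank_fin_fun] at h
  have : Module.finrank ℂ (XF p m) = Module.finrank ℂ (LinearMap.ker (prF p m)) := rfl
  omega

lemma finrank_XF_quot (p m : ℕ) :
    Module.finrank ℂ ((Fin (p + m) → ℂ) ⧸ XF p m) = m := by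
  have h := Submodule.finrank_quotient_add_finrank (XF p m)
  rw [finrank_XF, Module.finrank_fin_fun] at h
  omega

/-- The bilinear form `ω`. -/
noncomputable def BF (d p q m n : ℕ) (h1 : d ≤ p) (h2 : p ≤ n + d) (h3 : d ≤ q)
    (h4 : q ≤ m + d) : (Fin (p + m) → ℂ) →ₗ[ℂ] (Fin (q + n) → ℂ) →ₗ[ℂ] ℂ :=
  (∑ k : Fin d, (LinearMap.proj (em 0 (by omega) k : Fin (p + m))).smulRight
      (LinearMap.proj (em 0 (by omega) k : Fin (q + n))))
  + (∑ k : Fin (p - d), (LinearMap.proj (em d (by omega) k : Fin (p + m))).smulRight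
      (LinearMap.proj (em q (by omega) k : Fin (q + n))))
  + (∑ k : Fin (q - d), (LinearMap.proj (em p (by omega) k : Fin (p + m))).smulRight
      (LinearMap.proj (em d (by omega) k : Fin (q + n))))

lemma BF_apply (d p q m n : ℕ) (h1 : d ≤ p) (h2 : p ≤ n + d) (h3 : d ≤ q) (h4 : q ≤ m + d)
    (x : Fin (p + m) → ℂ) (y : Fin (q + n) → ℂ) :
    BF d p q m n h1 h2 h3 h4 x y =
      (∑ k : Fin d, x (em 0 (by omega) k) * y (em 0 (by omega) k))
      + (∑ k : Fin (p - d), x (em d (by omega) k) * y (em q (by omega) k))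
      + (∑ k : Fin (q - d), x (em p (by omega) k) * y (em d (by omega) k)) := by
  simp [BF, LinearMap.add_apply, LinearMap.coe_sum, Finset.sum_apply,
    LinearMap.smulRight_apply, LinearMap.proj_apply, LinearMap.smul_apply, smul_eq_mul]

lemma BF_flip (d p q m n : ℕ) (h1 : d ≤ p) (h2 : p ≤ n + d) (h3 : d ≤ q) (h4 : q ≤ m + d) :
    (BF d p q m n h1 h2 h3 h4).flip = BF d q p n m h3 h4 h1 h2 := by
  apply LinearMap.ext; intro y; apply LinearMap.ext; intro x
  rw [LinearMap.flip_apply, BF_apply, BF_apply]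
  have e1 : (∑ k : Fin d, x (em 0 (by omega : 0 + d ≤ p + m) k) * y (em 0 (by omega : 0 + d ≤ q + n) k))
      = ∑ k : Fin d, y (em 0 (by omega : 0 + d ≤ q + n) k) * x (em 0 (by omega : 0 + d ≤ p + m) k) :=
    Finset.sum_congr rfl fun k _ => mul_comm _ _
  have e2 : (∑ k : Fin (p - d), x (em d (by omega : d + (p - d) ≤ p + m) k) * y (em q (by omega : q + (p - d) ≤ q + n) k))
      = ∑ k : Fin (p - d), y (em q (by omega : q + (p - d) ≤ q + n) k) * x (em d (by omega : d + (p - d) ≤ p + m) k) :=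
    Finset.sum_congr rfl fun k _ => mul_comm _ _
  have e3 : (∑ k : Fin (q - d), x (em p (by omega : p + (q - d) ≤ p + m) k) * y (em d (by omega : d + (q - d) ≤ q + n) k))
      = ∑ k : Fin (q - d), y (em d (by omega : d + (q - d) ≤ q + n) k) * x (em p (by omega : p + (q - d) ≤ p + m) k) :=
    Finset.sum_congr rfl fun k _ => mul_comm _ _
  rw [e1, e2, e3]
  exact add_right_comm _ _ _

/-- Nondegeneracy on the `X₀` side. -/
lemma BF_nondeg (d p q m n : ℕ) (h1 : d ≤ p) (h2 : p ≤ n + d) (h3 : d ≤ q) (h4 : q ≤ m + d)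
    (x : Fin (p + m) → ℂ) (hx : x ∈ XF p m) (hx0 : x ≠ 0) :
    ∃ y : Fin (q + n) → ℂ, BF d p q m n h1 h2 h3 h4 x y ≠ 0 := by
  obtain ⟨j, hj⟩ : ∃ j, x j ≠ 0 := by
    by_contra h; push_neg at h; exact hx0 (funext h)
  have hjlt := j.isLt
  have hjp : (j : ℕ) < p := by
    by_contra hge
    push_neg at hge
    apply hj
    have h0 := mem_XF.mp hx ⟨(j : ℕ) - p, by omega⟩
    have : em p (le_refl (p + m)) ⟨(j : ℕ) - p, by omega⟩ = j := Fin.ext (by simp [em_val]; omega)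
    rwa [this] at h0
  by_cases hd : (j : ℕ) < d
  · -- use y = e_j
    refine ⟨ee (q + n) (j : ℕ), ?_⟩
    rw [BF_apply]
    have z2 : (∑ k : Fin (p - d), x (em d (by omega) k) *
        ee (q + n) (j : ℕ) (em q (by omega) k)) = 0 := by
      apply Finset.sum_eq_zero
      intro k _
      rw [ee_apply_ne _ (by simp [em_val]; omega), mul_zero]
    have z3 : (∑ k : Fin (q - d), x (em p (by omega) k) *
        ee (q + n) (j : ℕ) (em d (by omega) k)) = 0 := by
      apply Finset.sum_eq_zero
      intro k _
      have hk := k.isLt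
      rw [ee_apply_ne _ (by simp [em_val]; omega), mul_zero]
    rw [z2, z3, add_zero, add_zero]
    rw [Finset.sum_eq_single (⟨(j : ℕ), hd⟩ : Fin d)]
    · rw [ee_apply_eq _ (by simp [em_val]), mul_one]
      have e2 : em (N := p + m) 0 (by omega) (⟨(j : ℕ), hd⟩ : Fin d) = j :=
        Fin.ext (by simp [em_val])
      rw [e2]
      exact hj
    · intro b _ hb
      rw [ee_apply_ne, mul_zero]
      simp only [em_val]
      intro hEq
      exact hb (Fin.ext (by simp only [Fin.val_mk]; omega))
    · intro hmem
      exact absurd (Finset.mem_univ _) hmem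
  · -- d ≤ j < p ; use y = e_{q + (j - d)}
    refine ⟨ee (q + n) (q + ((j : ℕ) - d)), ?_⟩
    rw [BF_apply]
    have z1 : (∑ k : Fin d, x (em 0 (by omega) k) *
        ee (q + n) (q + ((j : ℕ) - d)) (em 0 (by omega) k)) = 0 := by
      apply Finset.sum_eq_zero
      intro k _
      have hk := k.isLt
      rw [ee_apply_ne _ (by simp [em_val]; omega), mul_zero]
    have z3 : (∑ k : Fin (q - d), x (em p (by omega) k) *
        ee (q + n) (q + ((j : ℕ) - d)) (em d (by omega) k)) = 0 := by
      apply Finset.sum_eq_zero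
      intro k _
      have hk := k.isLt
      rw [ee_apply_ne _ (by simp [em_val]; omega), mul_zero]
    rw [z1, z3, zero_add, add_zero]
    rw [Finset.sum_eq_single (⟨(j : ℕ) - d, by omega⟩ : Fin (p - d))]
    · rw [ee_apply_eq _ (by simp [em_val]), mul_one]
      have e2 : em (N := p + m) d (by omega) (⟨(j : ℕ) - d, by omega⟩ : Fin (p - d)) = j :=
        Fin.ext (by simp [em_val]; omega)
      rw [e2]
      exact hj
    · intro b _ hb
      have hb2 := b.isLt
      rw [ee_apply_ne, mul_zero]
      simp only [em_val]
      intro hEq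
      exact hb (Fin.ext (by simp only [Fin.val_mk]; omega))
    · intro hmem
      exact absurd (Finset.mem_univ _) hmem

/-- The map `X₀ → ℂ^d` of first `d` coordinates. -/
noncomputable def L1 (d p m : ℕ) (h : 0 + d ≤ p + m) : (XF p m) →ₗ[ℂ] (Fin d → ℂ) :=
  (LinearMap.funLeft ℂ ℂ (em 0 h)).comp (XF p m).subtype

/-- The map `ℂ^d → (Y₀)*`. -/
noncomputable def L2 (d q n : ℕ) (h : 0 + d ≤ q + n) :
    (Fin d → ℂ) →ₗ[ℂ] ((XF q n) →ₗ[ℂ] ℂ) :=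
  ∑ k : Fin d, (LinearMap.proj k).smulRight
    ((LinearMap.proj (em 0 h k)).comp (XF q n).subtype)

lemma L2_apply (d q n : ℕ) (h : 0 + d ≤ q + n) (c : Fin d → ℂ) (y : XF q n) :
    L2 d q n h c y = ∑ k : Fin d, c k * (y : Fin (q + n) → ℂ) (em 0 h k) := by
  simp [L2, LinearMap.coe_sum, Finset.sum_apply, LinearMap.smulRight_apply,
    LinearMap.proj_apply, LinearMap.smul_apply, smul_eq_mul]

lemma L1_surj (d p m : ℕ) (hdp : d ≤ p) (h : 0 + d ≤ p + m) :
    Surjective (L1 d p m h) := by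
  intro c
  have hx : (fun i : Fin (p + m) => if hi : (i : ℕ) < d then c ⟨i, hi⟩ else 0) ∈ XF p m := by
    rw [mem_XF]
    intro j
    rw [dif_neg]
    simp only [em_val]
    omega
  refine ⟨⟨_, hx⟩, ?_⟩
  funext k
  simp only [L1, LinearMap.comp_apply, Submodule.coe_subtype, LinearMap.funLeft_apply]
  rw [dif_pos (by simpa [em_val] using k.isLt)]
  congr 1
  exact Fin.ext (by simp [em_val])

lemma L2_inj (d q n : ℕ) (hdq : d ≤ q) (h : 0 + d ≤ q + n) :
    Injective (L2 d q n h) := by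
  rw [injective_iff_map_eq_zero]
  intro c hc
  funext k0
  have hy : ee (q + n) (0 + (k0 : ℕ)) ∈ XF q n := by
    rw [mem_XF]
    intro j
    have hk := k0.isLt
    exact ee_apply_ne _ (by simp [em_val]; omega)
  have h0 : L2 d q n h c ⟨_, hy⟩ = 0 := by rw [hc]; rfl
  rw [L2_apply] at h0
  rw [Finset.sum_eq_single k0] at h0
  · rw [show ((⟨_, hy⟩ : XF q n) : Fin (q + n) → ℂ) = ee (q + n) (0 + (k0 : ℕ)) from rfl] at h0
    rw [ee_apply_eq _ (by simp [em_val]), mul_one] at h0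
    simpa using h0
  · intro b _ hb
    rw [show ((⟨_, hy⟩ : XF q n) : Fin (q + n) → ℂ) = ee (q + n) (0 + (k0 : ℕ)) from rfl]
    rw [ee_apply_ne, mul_zero]
    simp only [em_val]
    intro hEq
    exact hb (Fin.ext (by omega))
  · intro hmem
    exact absurd (Finset.mem_univ _) hmem

end Stmt14Aux

open Stmt14Aux in
/-- Existence of a nondegenerate complement datum for `gl_∞` with prescribed standard
invariants `(d, p, q, m, n)` whenever `d ≤ p ≤ n + d` and `d ≤ q ≤ m + d`.
The underlying spaces are taken to be `ℂ^{p+m}` and `ℂ^{q+n}`. -/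
theorem stmt14 (d p q m n : ℕ) (h1 : d ≤ p) (h2 : p ≤ n + d) (h3 : d ≤ q) (h4 : q ≤ m + d) :
    ∃ (lam : ℕ → (Fin (p + m) → ℂ) →ₗ[ℂ] ℂ) (mu : ℕ → (Fin (q + n) → ℂ) →ₗ[ℂ] ℂ)
      (ω : (Fin (p + m) → ℂ) →ₗ[ℂ] (Fin (q + n) → ℂ) →ₗ[ℂ] ℂ)
      (X0 : Submodule ℂ (Fin (p + m) → ℂ)) (Y0 : Submodule ℂ (Fin (q + n) → ℂ))
      (T : ↥X0 →ₗ[ℂ] ↥Y0 →ₗ[ℂ] ℂ),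
      (∀ x, x ∈ X0 ↔ {i : ℕ | lam i x ≠ 0}.Finite) ∧
      (∀ y, y ∈ Y0 ↔ {i : ℕ | mu i y ≠ 0}.Finite) ∧
      (∀ (x : X0) (y : Y0),
        T x y = ω (x : Fin (p + m) → ℂ) (y : Fin (q + n) → ℂ)
          - ∑ᶠ i, lam i (x : Fin (p + m) → ℂ) * mu i (y : Fin (q + n) → ℂ)) ∧
      (∀ x ∈ X0, x ≠ 0 → ∃ y : Fin (q + n) → ℂ,
        ω x y - ∑ᶠ i, lam i x * mu i y ≠ 0) ∧
      (∀ y ∈ Y0, y ≠ 0 → ∃ x : Fin (p + m) → ℂ,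
        ω x y - ∑ᶠ i, lam i x * mu i y ≠ 0) ∧
      Module.finrank ℂ X0 = p ∧ Module.finrank ℂ Y0 = q ∧
      Module.finrank ℂ ((Fin (p + m) → ℂ) ⧸ X0) = m ∧
      Module.finrank ℂ ((Fin (q + n) → ℂ) ⧸ Y0) = n ∧
      Module.finrank ℂ (LinearMap.range T) = d := by
  have hX : (0 : ℕ) + d ≤ p + m := by omega
  have hY : (0 : ℕ) + d ≤ q + n := by omega
  refine ⟨lamF p m, lamF q n, BF d p q m n h1 h2 h3 h4, XF p m, XF q n,
    (L2 d q n hY).comp (L1 d p m hX), ?_, ?_, ?_, ?_, ?_, ?_, ?_, ?_, ?_, ?_⟩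
  · exact fun x => mem_XF_iff_finite x
  · exact fun y => mem_XF_iff_finite y
  · intro x y
    have hsum : (∑ᶠ i, lamF p m i (x : Fin (p + m) → ℂ) * lamF q n i (y : Fin (q + n) → ℂ)) = 0 :=
      finsum_eq_zero_of_forall_eq_zero fun i => by rw [lamF_eq_zero x.2 i, zero_mul]
    rw [hsum, sub_zero]
    rw [LinearMap.comp_apply, L2_apply, BF_apply]
    have z2 : (∑ k : Fin (p - d), (x : Fin (p + m) → ℂ) (em d (by omega) k) *
        (y : Fin (q + n) → ℂ) (em q (by omega) k)) = 0 := by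
      apply Finset.sum_eq_zero
      intro k _
      have hk := k.isLt
      have := mem_XF.mp y.2 ⟨(k : ℕ), by omega⟩
      have he : em q (le_refl (q + n)) (⟨(k : ℕ), by omega⟩ : Fin n) =
          em (N := q + n) q (by omega) k := Fin.ext (by simp [em_val])
      rw [he] at this
      rw [this, mul_zero]
    have z3 : (∑ k : Fin (q - d), (x : Fin (p + m) → ℂ) (em p (by omega) k) *
        (y : Fin (q + n) → ℂ) (em d (by omega) k)) = 0 := by
      apply Finset.sum_eq_zero
      intro k _
      have hk := k.isLt
      have := mem_XF.mp x.2 ⟨(k : ℕ), by omega⟩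
      have he : em p (le_refl (p + m)) (⟨(k : ℕ), by omega⟩ : Fin m) =
          em (N := p + m) p (by omega) k := Fin.ext (by simp [em_val])
      rw [he] at this
      rw [this, zero_mul]
    rw [z2, z3, add_zero, add_zero]
    apply Finset.sum_congr rfl
    intro k _
    simp only [L1, LinearMap.comp_apply, Submodule.coe_subtype, LinearMap.funLeft_apply]
  · intro x hx hx0
    obtain ⟨y, hy⟩ := BF_nondeg d p q m n h1 h2 h3 h4 x hx hx0
    refine ⟨y, ?_⟩
    have hsum : (∑ᶠ i, lamF p m i x * lamF q n i y) = 0 :=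
      finsum_eq_zero_of_forall_eq_zero fun i => by rw [lamF_eq_zero hx i, zero_mul]
    rw [hsum, sub_zero]
    exact hy
  · intro y hy hy0
    obtain ⟨x, hx⟩ := BF_nondeg d q p n m h3 h4 h1 h2 y hy hy0
    refine ⟨x, ?_⟩
    have hsum : (∑ᶠ i, lamF p m i x * lamF q n i y) = 0 :=
      finsum_eq_zero_of_forall_eq_zero fun i => by rw [lamF_eq_zero hy i, mul_zero]
    rw [hsum, sub_zero]
    rw [← BF_flip d p q m n h1 h2 h3 h4] at hx
    rw [LinearMap.flip_apply] at hx
    exact hx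
  · exact finrank_XF p m
  · exact finrank_XF q n
  · exact finrank_XF_quot p m
  · exact finrank_XF_quot q n
  · rw [LinearMap.range_comp_of_range_eq_top _
      (LinearMap.range_eq_top.mpr (L1_surj d p m h1 hX))]
    rw [LinearMap.finrank_range_of_inj (L2_inj d q n h3 hY)]
    exact Module.finrank_fin_fun ℂ
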